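/- For the renewal shift, let f : ℕ → ℝ be bounded with 0 ≤ f(s) ≤ ‖f‖_∞ for all s, and let 0 < β < log 2 / ‖f‖_∞. Then the series ∑_{ω ∈ R, ω ≠ ∅} exp(−β ∑_{j=0}^{|ω|−1} f(ω_j)) diverges; consequently there is no probability vector (c_ω)_{ω∈R} with c_∅ > 0 satisfying c_ω e^{β∑_j f(ω_j)} = c_∅ and ∑_ω c_ω = 1. -/

import Mathlib

/-- Renewal shift transition matrix. -/
def RenewalA (t s : ℕ) : Prop := 1 ≤ s ∧ (t = 1 ∨ t = s + 1)

/-- `w ∈ R`: the empty word, or a finite admissible word ending in `1`. -/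
def IsR (w : List ℕ) : Prop :=
  w = [] ∨ (List.Chain' RenewalA w ∧ (∀ a ∈ w, 1 ≤ a) ∧ w.getLast? = some 1)

namespace Stmt16Aux

def mk : List Bool → List ℕ
  | [] => [1]
  | b :: bs => (if b then 1 else (mk bs).headI + 1) :: mk bs

lemma mk_ne_nil (bs : List Bool) : mk bs ≠ [] := by
  cases bs <;> simp [mk]

lemma mk_headI_pos (bs : List Bool) : 1 ≤ (mk bs).headI := by
  induction bs with
  | nil => simp [mk]
  | cons b bs ih => cases b <;> simp [mk] <;> omega

lemma mk_length (bs : List Bool) : (mk bs).length = bs.length + 1 := by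
  induction bs with
  | nil => simp [mk]
  | cons b bs ih => simp [mk, ih]

lemma mk_isR (bs : List Bool) : IsR (mk bs) := by
  induction bs with
  | nil =>
    refine Or.inr ⟨?_, ?_, ?_⟩ <;> simp [mk, List.Chain', List.isChain_singleton]
  | cons b bs ih =>
    rcases ih with h | ⟨hc, hmem, hlast⟩
    · exact absurd h (mk_ne_nil bs)
    refine Or.inr ⟨?_, ?_, ?_⟩
    · rw [mk]; unfold List.Chain'; rw [List.isChain_cons]
      refine ⟨?_, hc⟩
      intro y hy
      have hne := mk_ne_nil bs
      have hy' : y = (mk bs).headI := by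
        cases hmk : mk bs with
        | nil => exact absurd hmk hne
        | cons a t => rw [hmk] at hy; simp at hy; simp [hmk, hy]
      subst hy'
      refine ⟨mk_headI_pos bs, ?_⟩
      cases b <;> simp
    · intro a ha
      rw [mk] at ha
      rcases List.mem_cons.mp ha with h | h
      · subst h
        have := mk_headI_pos bs
        cases b <;> simp <;> omega
      · exact hmem a h
    · rw [mk]
      cases hmk : mk bs with
      | nil => exact absurd hmk (mk_ne_nil bs)
      | cons a t =>
        rw [List.getLast?_cons_cons]
        rw [hmk] at hlast
        exact hlast

lemma mk_injective : Function.Injective mk := by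
  intro as
  induction as with
  | nil =>
    intro bs h
    cases bs with
    | nil => rfl
    | cons b bs =>
      exfalso
      have := congrArg List.length h
      simp [mk_length] at this
  | cons a as ih =>
    intro bs h
    cases bs with
    | nil =>
      exfalso
      have := congrArg List.length h
      simp [mk_length] at this
    | cons b bs =>
      rw [mk, mk] at h
      have h2 : mk as = mk bs := by injection h
      have h1 : (if a then 1 else (mk as).headI + 1)
          = (if b then 1 else (mk bs).headI + 1) := by injection h
      have hbs : as = bs := ih h2
      subst hbs
      have hp := mk_headI_pos as
      cases a <;> cases b <;> simp at h1 <;> first | rfl | omega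

lemma sum_le_of_le {f : ℕ → ℝ} {C : ℝ} (hfC : ∀ s, f s ≤ C) (w : List ℕ) :
    (w.map f).sum ≤ w.length * C := by
  induction w with
  | nil => simp
  | cons a w ih =>
    simp only [List.map_cons, List.sum_cons, List.length_cons]
    push_cast
    calc f a + (w.map f).sum ≤ C + w.length * C := add_le_add (hfC a) ih
    _ = (w.length + 1) * C := by ring

end Stmt16Aux

open Stmt16Aux in
/-- If `0 ≤ f ≤ C` (`C = ‖f‖_∞`) and `0 < β < log 2 / C`, then the series
`∑_{ω ∈ R, ω ≠ ∅} e^{-β ∑_j f(ω_j)}` diverges; consequently there is no probability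
vector `(c_ω)_{ω ∈ R}` with `c_∅ > 0`, `c_ω e^{β ∑_j f(ω_j)} = c_∅` and
`∑_ω c_ω = 1`. -/
theorem stmt16 (f : ℕ → ℝ) (C : ℝ) (hC : 0 < C) (hf0 : ∀ s, 0 ≤ f s)
    (hfC : ∀ s, f s ≤ C) (β : ℝ) (hβ0 : 0 < β) (hβ : β < Real.log 2 / C) :
    ¬ Summable (fun w : {w : List ℕ // IsR w ∧ w ≠ []} =>
      Real.exp (-β * (w.1.map f).sum)) ∧
    ¬ ∃ c : {w : List ℕ // IsR w} → ℝ,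
      (∀ w, 0 ≤ c w) ∧ 0 < c ⟨[], Or.inl rfl⟩ ∧
      (∀ w : {w : List ℕ // IsR w},
        c w * Real.exp (β * (w.1.map f).sum) = c ⟨[], Or.inl rfl⟩) ∧
      (∑' w, c w) = 1 := by
  set g : {w : List ℕ // IsR w ∧ w ≠ []} → ℝ :=
    fun w => Real.exp (-β * (w.1.map f).sum) with hg
  have hr : (1 : ℝ) < 2 * Real.exp (-(β * C)) := by
    have hβC : β * C < Real.log 2 := by
      rw [div_eq_mul_inv] at hβ
      calc β * C < (Real.log 2 * C⁻¹) * C := by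
            exact mul_lt_mul_of_pos_right hβ hC
      _ = Real.log 2 := by field_simp
    have h1 : Real.exp (-(β * C)) > Real.exp (-(Real.log 2)) :=
      Real.exp_lt_exp.mpr (by linarith)
    have h2 : Real.exp (-(Real.log 2)) = 1 / 2 := by
      rw [Real.exp_neg, Real.exp_log (by norm_num : (0:ℝ) < 2)]
      norm_num
    rw [h2] at h1
    linarith
  have hgpos : ∀ w, 0 < g w := fun w => Real.exp_pos _
  have key : ¬ Summable g := by
    intro hs
    set S := ∑' w, g w with hS
    obtain ⟨k, hk⟩ := pow_unbounded_of_one_lt (2 * S) hr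
    -- injection from (Fin k → Bool)
    set φ : (Fin k → Bool) → {w : List ℕ // IsR w ∧ w ≠ []} :=
      fun x => ⟨mk (List.ofFn x), mk_isR _, mk_ne_nil _⟩ with hφ
    have hφinj : Function.Injective φ := by
      intro x y hxy
      have := mk_injective (congrArg Subtype.val hxy)
      exact List.ofFn_injective this
    have hsum_le : ∑ x : Fin k → Bool, g (φ x) ≤ S := by
      have := hs.sum_le_tsum (Finset.univ.map ⟨φ, hφinj⟩)
        (fun w _ => (hgpos w).le)
      rwa [Finset.sum_map] at this
    have hterm : ∀ x : Fin k → Bool,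
        Real.exp (-(β * ((k + 1 : ℕ) * C))) ≤ g (φ x) := by
      intro x
      apply Real.exp_le_exp.mpr
      have hlen : (mk (List.ofFn x)).length = k + 1 := by
        rw [mk_length, List.length_ofFn]
      have hsum : ((mk (List.ofFn x)).map f).sum ≤ (k + 1 : ℕ) * C := by
        have := sum_le_of_le hfC (mk (List.ofFn x))
        rwa [hlen] at this
      have : -β * ((k + 1 : ℕ) * C) ≤ -β * ((mk (List.ofFn x)).map f).sum := by
        apply mul_le_mul_of_nonpos_left hsum (by linarith)
      simpa [neg_mul] using this
    have hcard : (2 : ℝ) ^ k * Real.exp (-(β * ((k + 1 : ℕ) * C))) ≤ S := by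
      calc (2 : ℝ) ^ k * Real.exp (-(β * ((k + 1 : ℕ) * C)))
          = ∑ _x : Fin k → Bool, Real.exp (-(β * ((k + 1 : ℕ) * C))) := by
            simp [Finset.card_univ, mul_comm]
      _ ≤ ∑ x : Fin k → Bool, g (φ x) := Finset.sum_le_sum fun x _ => hterm x
      _ ≤ S := hsum_le
    -- but 2^k * exp(-(k+1) β C) = (2 exp(-βC))^(k+1) / 2 ≥ r^k / 2 > S
    have hpow : (2 * Real.exp (-(β * C))) ^ (k + 1) =
        2 * ((2 : ℝ) ^ k * Real.exp (-(β * ((k + 1 : ℕ) * C)))) := by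
      rw [mul_pow, ← Real.exp_nat_mul]
      push_cast
      ring_nf
    have hrk : (2 * Real.exp (-(β * C))) ^ k ≤ (2 * Real.exp (-(β * C))) ^ (k + 1) :=
      pow_le_pow_right₀ (le_of_lt hr) (Nat.le_succ k)
    have hSpos : 0 ≤ S := tsum_nonneg fun w => (hgpos w).le
    nlinarith [hk, hrk, hpow, hcard]
  refine ⟨key, ?_⟩
  rintro ⟨c, hnn, hpos, heq, hsum⟩
  have hcs : Summable c := by
    by_contra h
    rw [tsum_eq_zero_of_not_summable h] at hsum
    norm_num at hsum
  set ι : {w : List ℕ // IsR w ∧ w ≠ []} → {w : List ℕ // IsR w} :=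
    fun w => ⟨w.1, w.2.1⟩ with hι
  have hιinj : Function.Injective ι := by
    intro x y hxy
    have h1 := Subtype.ext_iff.mp hxy
    exact Subtype.ext h1
  have hcomp : Summable (c ∘ ι) := hcs.comp_injective hιinj
  have hval : ∀ w, (c ∘ ι) w = c ⟨[], Or.inl rfl⟩ * g w := by
    intro w
    have h := heq (ι w)
    have hexp : Real.exp (β * ((ι w).1.map f).sum) ≠ 0 := Real.exp_ne_zero _
    have : c (ι w) = c ⟨[], Or.inl rfl⟩ * Real.exp (-(β * ((ι w).1.map f).sum)) := by
      rw [Real.exp_neg]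
      field_simp
      linarith [h]
    simpa [hg, neg_mul] using this
  have : Summable (fun w => c ⟨[], Or.inl rfl⟩ * g w) := by
    rwa [funext hval] at hcomp
  have hg_summable : Summable g := by
    have h2 := this.mul_left (c ⟨[], Or.inl rfl⟩)⁻¹
    have hne : c ⟨[], Or.inl rfl⟩ ≠ 0 := ne_of_gt hpos
    simpa [← mul_assoc, inv_mul_cancel₀ hne] using h2
  exact key hg_summable
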